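/- Let A be a left brace of cardinality p^n with p prime and p > n+1, and let I be an ideal of A. Then p^i·I = {p^i·a : a ∈ I} is an ideal of A for every natural number i. -/

import Mathlib

class LeftBrace (A : Type*) extends AddCommGroup A where
  circ : A → A → A
  circ_assoc : ∀ a b c : A, circ (circ a b) c = circ a (circ b c)
  circ_zero : ∀ a : A, circ a 0 = a
  zero_circ : ∀ a : A, circ 0 a = a
  inv : A → A
  circ_inv : ∀ a : A, circ a (inv a) = 0
  inv_circ : ∀ a : A, circ (inv a) a = 0
  circ_add : ∀ a b c : A, circ a (b + c) + a = circ a b + circ a c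

namespace LeftBrace

variable {A : Type*} [LeftBrace A]

def star (a b : A) : A := circ a b - a - b

def subStarSet (S T : Set A) : AddSubgroup A :=
  AddSubgroup.closure {x | ∃ a ∈ S, ∃ b ∈ T, x = star a b}

def subStar (S T : AddSubgroup A) : AddSubgroup A := subStarSet (S : Set A) (T : Set A)

/-- `leftPow A m` is `A^{m+1}` of the left chain `A^1 = A`, `A^{i+1} = A * A^i`. -/
def leftPow (A : Type*) [LeftBrace A] : ℕ → AddSubgroup A
  | 0 => ⊤
  | m + 1 => subStar ⊤ (leftPow A m)

def leftIdx (A : Type*) [LeftBrace A] (m : ℕ) : AddSubgroup A := leftPow A (m - 1)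

/-- `rightPow A m` is `A^{(m+1)}` of the right chain `A^{(1)} = A`, `A^{(i+1)} = A^{(i)} * A`. -/
def rightPow (A : Type*) [LeftBrace A] : ℕ → AddSubgroup A
  | 0 => ⊤
  | m + 1 => subStar (rightPow A m) ⊤

def rightIdx (A : Type*) [LeftBrace A] (m : ℕ) : AddSubgroup A := rightPow A (m - 1)

def strongPow (A : Type*) [LeftBrace A] : ℕ → AddSubgroup A
  | 0 => ⊤
  | m + 1 => ⨆ j : Fin (m + 1), subStar (strongPow A j) (strongPow A (m - j))
  termination_by m => m
  decreasing_by
  · exact j.isLt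
  · exact Nat.lt_succ_of_le (Nat.sub_le m j)

def strongIdx (A : Type*) [LeftBrace A] (m : ℕ) : AddSubgroup A := strongPow A (m - 1)

/-- An ideal of a left brace, as a subset: closed under the additive group
operations, absorbing under `*` on both sides, and normal in `(A, ∘)`. -/
def IsIdeal (I : Set A) : Prop :=
  (0 : A) ∈ I ∧ (∀ x ∈ I, ∀ y ∈ I, x + y ∈ I) ∧ (∀ x ∈ I, -x ∈ I) ∧
  (∀ a : A, ∀ i ∈ I, star a i ∈ I) ∧ (∀ a : A, ∀ i ∈ I, star i a ∈ I) ∧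
  (∀ a : A, ∀ i ∈ I, circ (circ a i) (inv a) ∈ I)

/-- `circPow a m` is the product of `m` copies of `a` in the group `(A, ∘)`. -/
def circPow (a : A) : ℕ → A
  | 0 => 0
  | m + 1 => circ a (circPow a m)

/-- Membership in the subgroup of `(A, ∘)` generated by a subset. -/
inductive circClosure (S : Set A) : A → Prop
  | of : ∀ x ∈ S, circClosure S x
  | zero : circClosure S 0
  | mul : ∀ x y : A, circClosure S x → circClosure S y → circClosure S (circ x y)
  | inv : ∀ x : A, circClosure S x → circClosure S (inv x)

end LeftBrace

namespace LeftBrace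

variable {A : Type*} [LeftBrace A]


theorem inv_eq_of_circ {a b : A} (h : circ a b = 0) : inv a = b := by
  have : circ (inv a) (circ a b) = inv a := by rw [h, circ_zero]
  rw [← circ_assoc, inv_circ, zero_circ] at this; exact this.symm

theorem inv_zero' : (inv (0:A)) = 0 := inv_eq_of_circ (zero_circ 0)

theorem inv_circ' (a b : A) : inv (circ a b) = circ (inv b) (inv a) := by
  refine inv_eq_of_circ ?_
  rw [circ_assoc, ← circ_assoc b, circ_inv, zero_circ, circ_inv]

/-- λ_a as a function -/
def lam (a : A) (x : A) : A := circ a x - a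

theorem circ_add' (a x y : A) : circ a (x + y) = circ a x + circ a y - a := by
  rw [← circ_add a x y]; abel

theorem lam_add (a x y : A) : lam a (x + y) = lam a x + lam a y := by
  unfold lam; rw [circ_add']; abel

theorem circ_sub' (a x y : A) : circ a (x - y) = circ a x - circ a y + a := by
  have := circ_add' a (x - y) y
  rw [sub_add_cancel] at this
  rw [this]; abel

def lamHom (a : A) : A →+ A := AddMonoidHom.mk' (lam a) (lam_add a)

theorem lam_comp (a b x : A) : lam a (lam b x) = lam (circ a b) x := by
  unfold lam
  rw [circ_sub', circ_assoc]
  abel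

theorem lam_zero_right (a : A) : lam a 0 = 0 := by
  simp [lam, circ_zero]

theorem lam_zero_left (x : A) : lam 0 x = x := by simp [lam, zero_circ]

theorem lam_inv_lam (a x : A) : lam (inv a) (lam a x) = x := by
  rw [lam_comp, inv_circ, lam_zero_left]

theorem lam_lam_inv (a x : A) : lam a (lam (inv a) x) = x := by
  rw [lam_comp, circ_inv, lam_zero_left]

theorem star_eq (a b : A) : star a b = lam a b - b := by unfold star lam; abel

theorem circ_eq_add (a b : A) : circ a b = a + lam a b := by unfold lam; abel

theorem lam_eq (a b : A) : lam a b = star a b + b := by rw [star_eq]; abel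

theorem star_add_right (a x y : A) : star a (x + y) = star a x + star a y := by
  simp only [star_eq, lam_add]; abel

theorem star_nsmul_right (a : A) (m : ℕ) (x : A) : star a (m • x) = m • star a x := by
  simp only [star_eq]
  rw [show lam a (m • x) = (lamHom a) (m • x) from rfl, map_nsmul]
  rw [smul_sub]; rfl

theorem lam_nsmul (a : A) (m : ℕ) (x : A) : lam a (m • x) = m • lam a x :=
  (lamHom a).map_nsmul m x

theorem lam_sub (a x y : A) : lam a (x - y) = lam a x - lam a y := (lamHom a).map_sub x y

theorem lam_neg (a : A) (x : A) : lam a (-x) = - lam a x := map_neg (lamHom a) x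

theorem lam_self_inv (a : A) : lam a (inv a) = -a := by
  have h := circ_eq_add a (inv a)
  rw [circ_inv a] at h
  rw [eq_neg_iff_add_eq_zero, add_comm, ← h]

theorem inv_eq_lam (a : A) : inv a = lam (inv a) (-a) := by
  conv_lhs => rw [← lam_inv_lam a (inv a)]
  rw [lam_self_inv]


end LeftBrace
section RingLemma
variable {R : Type*} [Ring R]

theorem one_add_pow_eq (d : R) (m : ℕ) :
    (1 + d)^m = ∑ k ∈ Finset.range (m+1), (m.choose k : ℕ) • d^k := by
  rw [add_comm, (Commute.one_right d).add_pow]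
  refine Finset.sum_congr rfl fun t ht => ?_
  rw [one_pow, mul_one, nsmul_eq_mul]; exact (Nat.cast_commute _ _).symm.eq

theorem geom_binom (d : R) (m : ℕ) :
    ∑ k ∈ Finset.range m, (1 + d)^k = ∑ t ∈ Finset.range m, (m.choose (t+1) : ℕ) • d^t := by
  induction m with
  | zero => simp
  | succ m ih =>
    rw [Finset.sum_range_succ, ih, one_add_pow_eq]
    have h1 : ∑ t ∈ Finset.range (m+1), ((m+1).choose (t+1) : ℕ) • d^t
        = ∑ t ∈ Finset.range (m+1), ((m.choose t : ℕ) • d^t + (m.choose (t+1) : ℕ) • d^t) := by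
      refine Finset.sum_congr rfl fun t ht => ?_
      rw [Nat.choose_succ_succ, add_nsmul]
    rw [h1, Finset.sum_add_distrib]
    have h2 : ∑ t ∈ Finset.range (m+1), (m.choose (t+1) : ℕ) • d^t
        = ∑ t ∈ Finset.range m, (m.choose (t+1) : ℕ) • d^t := by
      rw [Finset.sum_range_succ, Nat.choose_succ_self, zero_smul, add_zero]
    rw [h2]; abel
end RingLemma

namespace LeftBrace
variable {A : Type*} [LeftBrace A]

theorem end_sum_apply {α : Type*} (s : Finset α) (f : α → AddMonoid.End A) (b : A) :
    (∑ k ∈ s, f k) b = ∑ k ∈ s, f k b := by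
  induction s using Finset.cons_induction with
  | empty => rfl
  | cons a s ha ih => rw [Finset.sum_cons, Finset.sum_cons, ← ih]; rfl

/-- λ_a as an additive endomorphism -/
def sigma (a : A) : AddMonoid.End A := lamHom a

theorem sigma_apply (a x : A) : sigma a x = lam a x := rfl

theorem sigma_circ (a b : A) : sigma (circ a b) = sigma a * sigma b :=
  AddMonoidHom.ext fun x => (lam_comp a b x).symm

/-- iterated star: `dIter a k b = a * (a * (... * (a * b)))`, k times -/
def dIter (a : A) : ℕ → A → A
  | 0, b => b
  | k+1, b => star a (dIter a k b)

theorem delta_apply (a b : A) : (sigma a - 1) b = star a b := by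
  show sigma a b - b = _
  rw [sigma_apply, star_eq]

theorem delta_pow_apply (a : A) (k : ℕ) (b : A) : ((sigma a - 1)^k) b = dIter a k b := by
  induction k with
  | zero => rfl
  | succ k ih =>
    rw [pow_succ']
    show (sigma a - 1) (((sigma a - 1)^k) b) = _
    rw [ih, delta_apply]; rfl

theorem sigma_circPow (a : A) (m : ℕ) : (sigma (circPow a m)) = (sigma a)^m := by
  induction m with
  | zero =>
    refine AddMonoidHom.ext fun x => ?_
    show lam (0 : A) x = x
    exact lam_zero_left x
  | succ m ih =>
    show sigma (circ a (circPow a m)) = _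
    rw [sigma_circ, ih, pow_succ']

theorem key1 (a b : A) (m : ℕ) :
    star (circPow a m) b = ∑ k ∈ Finset.range m, (m.choose (k+1)) • dIter a (k+1) b := by
  have h1 : sigma a = 1 + (sigma a - 1) := by abel
  have hσ : (sigma a)^m = ∑ k ∈ Finset.range (m+1), (m.choose k) • (sigma a - 1)^k := by
    conv_lhs => rw [h1]
    exact one_add_pow_eq _ m
  have h2 : star (circPow a m) b = ((sigma a)^m) b - b := by
    rw [star_eq, ← sigma_apply, sigma_circPow]
  rw [h2, hσ, end_sum_apply, Finset.sum_range_succ']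
  have h3 : ∀ k ∈ Finset.range m, ((m.choose (k+1)) • (sigma a - 1)^(k+1)) b
      = (m.choose (k+1)) • dIter a (k+1) b := by
    intro k _
    show (m.choose (k+1)) • (((sigma a - 1)^(k+1)) b) = _
    rw [delta_pow_apply]
  rw [Finset.sum_congr rfl h3]
  have h4 : (m.choose 0 • (sigma a - 1)^0 : AddMonoid.End A) b = b := by
    rw [Nat.choose_zero_right, one_smul, pow_zero]; rfl
  rw [h4]; abel

theorem key2 (a : A) (m : ℕ) :
    circPow a m = ∑ k ∈ Finset.range m, (m.choose (k+1)) • dIter a k a := by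
  have h0 : circPow a m = ∑ k ∈ Finset.range m, ((sigma a)^k) a := by
    induction m with
    | zero => rfl
    | succ m ih =>
      show circ a (circPow a m) = _
      rw [Finset.sum_range_succ', circ_eq_add]
      have h5 : ∀ k ∈ Finset.range m, ((sigma a)^(k+1)) a = sigma a (((sigma a)^k) a) := by
        intro k _; rw [pow_succ']; rfl
      rw [Finset.sum_congr rfl h5, ← map_sum (sigma a) (fun k => ((sigma a)^k) a) (Finset.range m),
        ← ih]
      have h6 : ((sigma a)^0) a = a := rfl
      rw [h6, add_comm a (lam a (circPow a m))]
      rfl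
  have h1 : sigma a = 1 + (sigma a - 1) := by abel
  have hgeo : ∑ k ∈ Finset.range m, (sigma a)^k
      = ∑ t ∈ Finset.range m, (m.choose (t+1)) • (sigma a - 1)^t := by
    conv_lhs => rw [h1]
    exact geom_binom _ m
  rw [h0, ← end_sum_apply, hgeo, end_sum_apply]
  refine Finset.sum_congr rfl fun t _ => ?_
  show (m.choose (t+1)) • (((sigma a - 1)^t) a) = _
  rw [delta_pow_apply]

end LeftBrace
namespace LeftBrace
variable {A : Type*} [LeftBrace A]

theorem lam_star (z a b : A) :
    lam z (star a b) = star (circ (circ z a) (inv z)) (lam z b) := by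
  have hz : circ (circ (circ z a) (inv z)) z = circ z a := by
    rw [circ_assoc, inv_circ, circ_zero]
  rw [star_eq (circ (circ z a) (inv z)), lam_comp, hz, ← lam_comp, star_eq a, lam_sub]


def IChain (I : Set A) : ℕ → AddSubgroup A
  | 0 => AddSubgroup.closure I
  | j+1 => AddSubgroup.closure {x | ∃ a : A, ∃ b ∈ IChain I j, x = star a b}

section Chain
variable {I : Set A} (hI : IsIdeal I)
include hI

theorem mem_IC0 {x : A} : x ∈ IChain I 0 ↔ x ∈ I := by
  constructor
  · intro hx
    refine AddSubgroup.closure_induction (fun y hy => hy) hI.1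
      (fun y z _ _ hy hz => hI.2.1 y hy z hz) (fun y _ hy => hI.2.2.1 y hy) hx
  · exact fun hx => AddSubgroup.subset_closure hx

theorem IC_le_I : ∀ j, ∀ x ∈ IChain I j, x ∈ I := by
  intro j
  induction j with
  | zero => exact fun x hx => (mem_IC0 hI).mp hx
  | succ j ih =>
    intro x hx
    refine AddSubgroup.closure_induction ?_ hI.1
      (fun y z _ _ hy hz => hI.2.1 y hy z hz) (fun y _ hy => hI.2.2.1 y hy) hx
    rintro y ⟨a, b, hb, rfl⟩
    exact hI.2.2.2.1 a b (ih b hb)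

theorem IC_succ_le : ∀ j, IChain I (j+1) ≤ IChain I j := by
  intro j
  induction j with
  | zero =>
    refine (AddSubgroup.closure_le _).mpr ?_
    rintro x ⟨a, b, hb, rfl⟩
    exact (mem_IC0 hI).mpr (hI.2.2.2.1 a b (IC_le_I hI 0 b hb))
  | succ j ih =>
    refine (AddSubgroup.closure_le _).mpr ?_
    rintro x ⟨a, b, hb, rfl⟩
    exact AddSubgroup.subset_closure ⟨a, b, ih hb, rfl⟩

theorem IC_le_of_le : ∀ {j k}, j ≤ k → IChain I k ≤ IChain I j := by
  intro j k h
  induction h with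
  | refl => exact le_rfl
  | step h ih => exact le_trans (IC_succ_le hI _) ih

theorem star_mem_IC {j : ℕ} (a : A) {b : A} (hb : b ∈ IChain I j) :
    star a b ∈ IChain I (j+1) :=
  AddSubgroup.subset_closure ⟨a, b, hb, rfl⟩

theorem dIter_mem_IC {j : ℕ} (a : A) {b : A} (hb : b ∈ IChain I j) {k : ℕ} (hk : 1 ≤ k) :
    dIter a k b ∈ IChain I (j+1) := by
  induction k with
  | zero => omega
  | succ k ih =>
    rcases Nat.eq_or_lt_of_le hk with h | h
    · rw [← h] at *
      exact star_mem_IC hI a hb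
    · have hk' : 1 ≤ k := by omega
      exact IC_succ_le hI (j+1) (star_mem_IC hI a (ih hk'))

theorem dIter_mem_IC' (ha : _root_.id True) {a b : A} (haI : a ∈ I) {k : ℕ} (hk : 1 ≤ k) :
    dIter a k b ∈ IChain I (k-1) := by
  induction k with
  | zero => omega
  | succ k ih =>
    rcases Nat.eq_zero_or_pos k with h | h
    · subst h
      show star a b ∈ IChain I 0
      exact (mem_IC0 hI).mpr (hI.2.2.2.2.1 b a haI)
    · have := star_mem_IC hI a (ih h)
      have he : k - 1 + 1 = k := by omega
      rw [he] at this
      simpa [dIter] using this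

theorem lam_mem_IC : ∀ j, ∀ z : A, ∀ x ∈ IChain I j, lam z x ∈ IChain I j := by
  intro j
  induction j with
  | zero =>
    intro z x hx
    refine (mem_IC0 hI).mpr ?_
    have := IC_le_I hI 0 x hx
    rw [lam_eq]
    exact hI.2.1 _ (hI.2.2.2.1 z x this) x this
  | succ j ih =>
    intro z x hx
    refine AddSubgroup.closure_induction ?_ ?_ ?_ ?_ hx
    · rintro y ⟨a, b, hb, rfl⟩
      rw [lam_star]
      exact star_mem_IC hI _ (ih z b hb)
    · rw [lam_zero_right]; exact (IChain I (j+1)).zero_mem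
    · intro y w _ _ hy hw
      rw [lam_add]
      exact (IChain I (j+1)).add_mem hy hw
    · intro y _ hy
      rw [lam_neg]
      exact (IChain I (j+1)).neg_mem hy

end Chain
end LeftBrace
section Coinv
universe u v

instance addAutMulGroup (M : Type*) [Add M] : Group (AddAut M) where
  mul g h := AddEquiv.trans h g
  one := AddEquiv.refl _
  inv := AddEquiv.symm
  mul_assoc _ _ _ := rfl
  one_mul _ := rfl
  mul_one _ := rfl
  inv_mul_cancel := AddEquiv.self_trans_symm

instance addAutApplyMulAction (M : Type*) [Add M] : MulAction (AddAut M) M where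
  smul f a := f a
  one_smul _ := rfl
  mul_smul _ _ _ := rfl

theorem coinv_aux (p : ℕ) (hp : p.Prime) (G : Type v) [Group G] (hG : IsPGroup p G) :
    ∀ (N : ℕ) (M : Type u) [AddCommGroup M] [Finite M] (φ : G →* AddAut M),
      (∃ e, Nat.card M = p ^ e) → Nat.card M ≤ N →
      AddSubgroup.closure {x : M | ∃ (g : G) (m : M), x = φ g m - m} = ⊤ →
      ∀ x : M, x = 0 := by
  haveI : Fact p.Prime := ⟨hp⟩
  intro N
  induction N with
  | zero =>
    intro M _ _ φ hcard hle hgen x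
    have : 0 < Nat.card M := Nat.card_pos
    omega
  | succ N IH =>
    intro M _ _ φ hcard hle hgen x
    rcases hcard with ⟨e, he⟩
    rcases Nat.eq_zero_or_pos e with rfl | hepos
    · haveI : Subsingleton M := by
        rw [pow_zero] at he
        exact (Nat.card_eq_one_iff_unique.mp he).1
      exact Subsingleton.elim x 0
    set F : AddSubgroup M :=
      { carrier := {m : M | ∀ g : G, φ g m = m}
        zero_mem' := fun g => map_zero (φ g)
        add_mem' := by
          intro a b ha hb g
          rw [map_add, ha g, hb g]
        neg_mem' := by
          intro a ha g
          rw [map_neg, ha g] } with hF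
    letI : MulAction G M := MulAction.compHom M φ
    have hsmul : ∀ (g : G) (m : M), g • m = φ g m := fun g m => rfl
    have hfix : MulAction.fixedPoints G M = (F : Set M) := by
      ext m
      simp only [MulAction.mem_fixedPoints]
      constructor
      · intro h g; rw [← hsmul g m]; exact h g
      · intro h g; rw [hsmul g m]; exact h g
    -- F nontrivial
    have hFne : ∃ m : M, m ∈ F ∧ m ≠ 0 := by
      by_contra hcon
      push_neg at hcon
      have hsub : MulAction.fixedPoints G M ⊆ {(0 : M)} := by
        intro m hm
        rcases eq_or_ne m 0 with rfl | hne
        · rfl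
        · exact absurd hne (by simpa using hcon m (by rwa [hfix] at hm))
      have h0 : (0:M) ∈ MulAction.fixedPoints G M := by
        rw [hfix]; exact F.zero_mem
      have hone : Nat.card (MulAction.fixedPoints G M) = 1 := by
        have : MulAction.fixedPoints G M = {(0:M)} := le_antisymm hsub (by simpa using h0)
        rw [this]; simp
      have hmod := IsPGroup.card_modEq_card_fixedPoints hG M
      rw [hone, he] at hmod
      have hdvd : p ∣ p ^ e := dvd_pow_self p (by omega)
      have h1 : p ^ e % p = 0 := Nat.mod_eq_zero_of_dvd hdvd
      have h2 : 1 % p = 1 := Nat.mod_eq_of_lt hp.one_lt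
      have h3 := hp.one_lt
      unfold Nat.ModEq at hmod
      omega
    -- the quotient M ⧸ F
    rcases hFne with ⟨m₀, hm₀F, hm₀ne⟩
    haveI : Nontrivial F := ⟨⟨0, F.zero_mem⟩, ⟨m₀, hm₀F⟩, fun hcon =>
      hm₀ne (by simpa using (congrArg Subtype.val hcon).symm)⟩
    have hcomap : ∀ g : G, F ≤ F.comap (φ g).toAddMonoidHom := by
      intro g m hm
      have : φ g m = m := hm g
      simp only [AddSubgroup.mem_comap]
      rw [AddEquiv.coe_toAddMonoidHom, this]
      exact hm
    -- descend each automorphism to the quotient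
    set ψ : G → (M ⧸ F) →+ (M ⧸ F) :=
      fun g => QuotientAddGroup.map F F (φ g).toAddMonoidHom (hcomap g) with hψ
    have hψmk : ∀ (g : G) (m : M), ψ g ((m : M ⧸ F)) = ((φ g m : M) : M ⧸ F) := by
      intro g m; rfl
    have hψcomp : ∀ (g h : G) (z : M ⧸ F), ψ (g * h) z = ψ g (ψ h z) := by
      intro g h z
      induction z using QuotientAddGroup.induction_on with
      | H m => rw [hψmk, hψmk, hψmk, map_mul]; rfl
    have hψone : ∀ z : M ⧸ F, ψ 1 z = z := by
      intro z
      induction z using QuotientAddGroup.induction_on with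
      | H m => rw [hψmk, map_one]; rfl
    have hψbij : ∀ g : G, Function.Bijective (ψ g) := by
      intro g
      have hsurj : Function.Surjective (ψ g) := by
        intro z
        induction z using QuotientAddGroup.induction_on with
        | H m => exact ⟨((φ g).symm m : M), by rw [hψmk]; simp⟩
      exact ⟨(Finite.injective_iff_surjective).mpr hsurj, hsurj⟩
    set φ' : G →* AddAut (M ⧸ F) := MonoidHom.mk' (fun g =>
        { toFun := ψ g
          invFun := ψ g⁻¹
          left_inv := fun z => by rw [← hψcomp, inv_mul_cancel, hψone]
          right_inv := fun z => by rw [← hψcomp, mul_inv_cancel, hψone]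
          map_add' := (ψ g).map_add }) (by
        intro g h
        ext z
        exact hψcomp g h z) with hφ'
    have hφ'mk : ∀ (g : G) (m : M), φ' g ((m : M ⧸ F)) = ((φ g m : M) : M ⧸ F) :=
      fun g m => hψmk g m
    -- cardinality of the quotient
    have hcards : Nat.card M = Nat.card (M ⧸ F) * Nat.card F :=
      AddSubgroup.card_eq_card_quotient_mul_card_addSubgroup F
    have hFgt : 1 < Nat.card F := Finite.one_lt_card
    have hQpos : 0 < Nat.card (M ⧸ F) := Nat.card_pos
    have hQlt : Nat.card (M ⧸ F) ≤ N := by nlinarith [hle, hcards, hFgt, hQpos]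
    have hQcard : ∃ e', Nat.card (M ⧸ F) = p ^ e' := by
      have hdvd : Nat.card (M ⧸ F) ∣ p ^ e := ⟨Nat.card F, by rw [← he, hcards]⟩
      rcases (Nat.dvd_prime_pow hp).mp hdvd with ⟨e', _, he'⟩
      exact ⟨e', he'⟩
    -- generating condition descends
    have hgen' : AddSubgroup.closure {z : M ⧸ F | ∃ (g : G) (w : M ⧸ F), z = φ' g w - w} = ⊤ := by
      rw [eq_top_iff]
      intro z _
      induction z using QuotientAddGroup.induction_on with
      | H m =>
        have hm : m ∈ AddSubgroup.closure {x : M | ∃ (g : G) (m : M), x = φ g m - m} := by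
          rw [hgen]; trivial
        refine AddSubgroup.closure_induction ?_ ?_ ?_ ?_ hm
        · rintro y ⟨g, w, rfl⟩
          exact AddSubgroup.subset_closure ⟨g, (w : M ⧸ F), by rw [QuotientAddGroup.mk_sub, hφ'mk]⟩
        · exact AddSubgroup.zero_mem _
        · intro y w _ _ hy hw
          rw [QuotientAddGroup.mk_add]
          exact AddSubgroup.add_mem _ hy hw
        · intro y _ hy
          rw [QuotientAddGroup.mk_neg]
          exact AddSubgroup.neg_mem _ hy
    -- apply induction hypothesis
    have hquot := IH (M ⧸ F) φ' hQcard hQlt hgen'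
    have hFtop : ∀ m : M, m ∈ F := by
      intro m
      have : ((m : M ⧸ F)) = 0 := hquot _
      exact (QuotientAddGroup.eq_zero_iff m).mp this
    -- now every generator is zero
    have hzero : AddSubgroup.closure {x : M | ∃ (g : G) (m : M), x = φ g m - m} ≤ ⊥ := by
      refine (AddSubgroup.closure_le _).mpr ?_
      rintro y ⟨g, w, rfl⟩
      have : φ g w = w := hFtop w g
      simp [this]
    rw [hgen] at hzero
    simpa using hzero (AddSubgroup.mem_top x)
namespace LeftBrace

def CircType (A : Type*) := A

def CircType.toA {A : Type*} (a : CircType A) : A := a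

def CircType.ofA {A : Type*} (a : A) : CircType A := a

variable {A : Type*} [LeftBrace A]

instance : Group (CircType A) where
  mul a b := CircType.ofA (circ a.toA b.toA)
  one := CircType.ofA 0
  inv a := CircType.ofA (inv a.toA)
  mul_assoc a b c := circ_assoc (A := A) a.toA b.toA c.toA
  one_mul a := zero_circ (A := A) a.toA
  mul_one a := circ_zero (A := A) a.toA
  inv_mul_cancel a := inv_circ (A := A) a.toA

theorem circType_mul_def (a b : CircType A) : a * b = CircType.ofA (circ a.toA b.toA) := rfl

instance [Fintype A] : Finite (CircType A) := by
  show Finite A; infer_instance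

theorem circType_card : Nat.card (CircType A) = Nat.card A := rfl

section CardChain

variable {p n : ℕ} {I : Set A} (hI : IsIdeal I)
include hI

/-- restriction of λ_z to an invariant chain subgroup, as an automorphism -/
def lamRestrict (j : ℕ) (z : A) : AddAut ↥(IChain I j) where
  toFun x := ⟨lam z x, lam_mem_IC hI j z x x.2⟩
  invFun x := ⟨lam (inv z) x, lam_mem_IC hI j (inv z) x x.2⟩
  left_inv x := by
    ext
    exact lam_inv_lam z x
  right_inv x := by
    ext
    exact lam_lam_inv z x
  map_add' x y := by
    ext
    exact lam_add z x y

theorem lamRestrict_apply (j : ℕ) (z : A) (x : ↥(IChain I j)) :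
    ((lamRestrict hI j z x : ↥(IChain I j)) : A) = lam z x := rfl

def lamRestrictHom (j : ℕ) : CircType A →* AddAut ↥(IChain I j) :=
  MonoidHom.mk' (fun z => lamRestrict hI j z.toA) (by
    intro z w
    ext x
    show lam (circ z.toA w.toA) (x : A) = lam z.toA (lam w.toA (x : A))
    exact (lam_comp z.toA w.toA x).symm)

variable [Fintype A] (hp : p.Prime) (hcard : Nat.card A = p ^ n)
include hp hcard

theorem IC_bot_of_stable (j : ℕ) (hstab : IChain I (j+1) = IChain I j) :
    IChain I j = ⊥ := by
  have hG : IsPGroup p (CircType A) := IsPGroup.of_card (by rw [circType_card, hcard])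
  set S := IChain I j with hS
  have hMcard : ∃ e, Nat.card ↥S = p ^ e := by
    have hdvd : Nat.card ↥S ∣ p ^ n := by
      rw [← hcard]
      exact AddSubgroup.card_addSubgroup_dvd_card S
    rcases (Nat.dvd_prime_pow hp).mp hdvd with ⟨e, _, he⟩
    exact ⟨e, he⟩
  have hgen : AddSubgroup.closure
      {x : ↥S | ∃ (g : CircType A) (m : ↥S), x = (lamRestrictHom hI j) g m - m} = ⊤ := by
    set T := {x : ↥S | ∃ (g : CircType A) (m : ↥S), x = (lamRestrictHom hI j) g m - m} with hT
    have himg : S.subtype '' T = {x | ∃ a : A, ∃ b ∈ IChain I j, x = star a b} := by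
      ext y
      constructor
      · rintro ⟨x, ⟨g, m, rfl⟩, rfl⟩
        refine ⟨g.toA, (m : A), m.2, ?_⟩
        show ((lamRestrictHom hI j g m - m : ↥S) : A) = _
        rw [AddSubgroup.coe_sub]
        show lam g.toA (m : A) - (m : A) = _
        rw [star_eq]
      · rintro ⟨a, b, hb, rfl⟩
        have hmem : star a b ∈ S := hstab ▸ star_mem_IC hI a hb
        refine ⟨⟨star a b, hmem⟩, ⟨CircType.ofA a, ⟨b, hb⟩, ?_⟩, rfl⟩
        ext
        show star a b = lam a b - b
        rw [star_eq]
    have hmap : AddSubgroup.map S.subtype (AddSubgroup.closure T)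
        = AddSubgroup.map S.subtype ⊤ := by
      rw [AddMonoidHom.map_closure, himg]
      show IChain I (j+1) = _
      rw [hstab]
      ext y
      simp only [AddSubgroup.mem_map, AddSubgroup.mem_top]
      constructor
      · intro hy; exact ⟨⟨y, hy⟩, trivial, rfl⟩
      · rintro ⟨x, _, rfl⟩; exact x.2
    exact AddSubgroup.map_injective S.subtype_injective hmap
  have hzero := coinv_aux p hp (CircType A) hG (Nat.card ↥S) ↥S (lamRestrictHom hI j)
    hMcard le_rfl hgen
  rw [eq_bot_iff]
  intro x hx
  have := hzero ⟨x, hx⟩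
  simpa using congrArg Subtype.val this

theorem IC_n_bot : IChain I n = ⊥ := by
  have key : ∀ j : ℕ, IChain I j = ⊥ ∨ Nat.card ↥(IChain I j) * p ^ j ∣ p ^ n := by
    intro j
    induction j with
    | zero =>
      right
      rw [pow_zero, mul_one, ← hcard]
      exact AddSubgroup.card_addSubgroup_dvd_card _
    | succ j ih =>
      rcases ih with hbot | hdvd
      · left
        rw [eq_bot_iff, ← hbot]
        exact IC_succ_le hI j
      by_cases hstab : IChain I (j+1) = IChain I j
      · left
        rw [hstab]
        exact IC_bot_of_stable hI hp hcard j hstab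
      right
      have hle : IChain I (j+1) ≤ IChain I j := IC_succ_le hI j
      have hdvd2 : Nat.card ↥(IChain I (j+1)) ∣ Nat.card ↥(IChain I j) :=
        AddSubgroup.card_dvd_of_le hle
      have hne : Nat.card ↥(IChain I (j+1)) ≠ Nat.card ↥(IChain I j) := by
        intro hceq
        apply hstab
        have hsub : (IChain I (j+1) : Set A) ⊆ (IChain I j : Set A) := hle
        have hfin : (IChain I j : Set A).Finite := Set.toFinite _
        have : (IChain I (j+1) : Set A) = (IChain I j : Set A) := by
          apply Set.eq_of_subset_of_ncard_le hsub _ hfin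
          rw [← Nat.card_coe_set_eq, ← Nat.card_coe_set_eq]
          rw [show Nat.card ↥(IChain I j : Set A) = Nat.card ↥(IChain I j) from rfl,
            show Nat.card ↥(IChain I (j+1) : Set A) = Nat.card ↥(IChain I (j+1)) from rfl, hceq]
        exact SetLike.ext' this
      -- both are powers of p
      have hdvdn : Nat.card ↥(IChain I j) ∣ p ^ n := dvd_trans (Dvd.intro _ rfl) hdvd
      rcases (Nat.dvd_prime_pow hp).mp hdvdn with ⟨α, _, hα⟩
      rcases (Nat.dvd_prime_pow hp).mp (hdvd2.trans hdvdn) with ⟨β, _, hβ⟩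
      have hβα : β < α := by
        by_contra hcon
        push_neg at hcon
        have : Nat.card ↥(IChain I j) ∣ Nat.card ↥(IChain I (j+1)) := by
          rw [hα, hβ]
          exact pow_dvd_pow p hcon
        exact hne (Nat.dvd_antisymm hdvd2 this)
      have hmul : Nat.card ↥(IChain I (j+1)) * p ∣ Nat.card ↥(IChain I j) := by
        rw [hα, hβ]
        have : p ^ β * p = p ^ (β + 1) := by ring
        rw [this]
        exact pow_dvd_pow p (by omega)
      calc Nat.card ↥(IChain I (j+1)) * p ^ (j+1)
          = (Nat.card ↥(IChain I (j+1)) * p) * p ^ j := by ring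
        _ ∣ Nat.card ↥(IChain I j) * p ^ j := mul_dvd_mul_right hmul _
        _ ∣ p ^ n := hdvd
  rcases key n with hbot | hdvd
  · exact hbot
  · have hcard1 : Nat.card ↥(IChain I n) ≤ 1 := by
      have hp1 : 0 < p ^ n := pow_pos hp.pos n
      have := Nat.le_of_dvd hp1 hdvd
      have hpos : 0 < Nat.card ↥(IChain I n) := Nat.card_pos
      nlinarith
    exact AddSubgroup.eq_bot_of_card_le _ hcard1

end CardChain
end LeftBrace
namespace LeftBrace
variable {A : Type*} [LeftBrace A]

theorem inv_inv' (a : A) : inv (inv a) = a := inv_eq_of_circ (inv_circ a)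

theorem star_zero_left (b : A) : star (0 : A) b = 0 := by
  simp [star, zero_circ]

theorem star_circ_left (x y b : A) :
    star (circ x y) b = lam x (star y b) + star x b := by
  rw [star_eq, ← lam_comp, star_eq, star_eq, lam_sub]
  abel

theorem star_inv_left (x b : A) :
    star (inv x) b = - lam (inv x) (star x b) := by
  have h : lam (inv x) (star x b) = b - lam (inv x) b := by
    rw [star_eq, lam_sub, lam_inv_lam]
  rw [h, star_eq]
  abel

def conj (z x : A) : A := circ (circ z x) (inv z)

theorem conj_zero (z : A) : conj z 0 = 0 := by
  rw [conj, circ_zero, circ_inv]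

theorem conj_circ (z x y : A) : conj z (circ x y) = circ (conj z x) (conj z y) := by
  unfold conj
  rw [circ_assoc (circ z x) (inv z), ← circ_assoc (inv z) (circ z y) (inv z),
    ← circ_assoc (inv z) z y, inv_circ, zero_circ, circ_assoc z (circ x y) (inv z),
    circ_assoc x y (inv z), ← circ_assoc z x (circ y (inv z))]

theorem conj_inv (z x : A) : conj z (inv x) = inv (conj z x) := by
  unfold conj
  rw [inv_circ', inv_circ', inv_inv', circ_assoc]

theorem conj_circPow (z w : A) (k : ℕ) : conj z (circPow w k) = circPow (conj z w) k := by
  induction k with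
  | zero => exact conj_zero z
  | succ k ih =>
    show conj z (circ w (circPow w k)) = circ (conj z w) (circPow (conj z w) k)
    rw [conj_circ, ih]

section Assembly

variable [Fintype A] {p n i : ℕ} {I : Set A}
  (hI : IsIdeal I) (hp : p.Prime) (hcard : Nat.card A = p ^ n)
  (hpn : n + 1 < p) (hi : 1 ≤ i)

-- membership helpers not needing all hypotheses
omit hp hcard hpn hi

include hI

theorem I_nsmul {a : A} (ha : a ∈ I) (k : ℕ) : k • a ∈ I := by
  induction k with
  | zero => simpa using hI.1
  | succ k ih =>
    rw [succ_nsmul]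
    exact hI.2.1 _ ih _ ha

theorem I_lam (z : A) {a : A} (ha : a ∈ I) : lam z a ∈ I := by
  rw [lam_eq]
  exact hI.2.1 _ (hI.2.2.2.1 z a ha) a ha

theorem dIter_mem_IC_add {j : ℕ} (a : A) {b : A} (hb : b ∈ IChain I j) (k : ℕ) :
    dIter a k b ∈ IChain I (j + k) := by
  induction k with
  | zero => simpa [dIter] using hb
  | succ k ih => exact star_mem_IC hI a ih

theorem dIter_mem_I {a b : A} (ha : a ∈ I) {k : ℕ} (hk : 1 ≤ k) : dIter a k b ∈ I :=
  IC_le_I hI _ _ (dIter_mem_IC' hI trivial ha hk)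

include hp hcard hpn hi

theorem IC_top_bot {k : ℕ} (hk : n ≤ k) : IChain I k = ⊥ :=
  le_antisymm (le_trans (IC_le_of_le hI hk) (IC_n_bot hI hp hcard).le) bot_le

theorem choose_div_dvd {k : ℕ} (h1 : 1 ≤ k) (h2 : k ≤ n + 1) : p ^ i ∣ (p ^ i).choose k := by
  set m := p ^ i with hm
  obtain ⟨j, rfl⟩ : ∃ j, k = j + 1 := ⟨k - 1, by omega⟩
  have hmpos : 1 ≤ m := Nat.one_le_pow _ _ hp.pos
  have hkey := Nat.add_one_mul_choose_eq (m - 1) j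
  have hms : m - 1 + 1 = m := by omega
  rw [hms] at hkey
  have hdvd : m ∣ m.choose (j + 1) * (j + 1) := ⟨(m-1).choose j, hkey.symm⟩
  have hcop : Nat.Coprime (p ^ i) (j + 1) := by
    refine Nat.Coprime.pow_left i (hp.coprime_iff_not_dvd.mpr ?_)
    intro hcon
    have := Nat.le_of_dvd (by omega) hcon
    omega
  exact hcop.dvd_of_dvd_mul_right hdvd

theorem sum_reduce (d M : ℕ) (hd : 1 ≤ d) (hdn : d ≤ 2) (hM : n ≤ M) (y : ℕ → A)
    (hy : ∀ k, n ≤ k → y k = 0) :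
    ∑ k ∈ Finset.range M, ((p ^ i).choose (k + d)) • y k
      = p ^ i • ∑ k ∈ Finset.range n, (((p ^ i).choose (k + d)) / p ^ i) • y k := by
  have hsub : Finset.range n ⊆ Finset.range M := Finset.range_subset_range.mpr hM
  rw [← Finset.sum_subset hsub (fun k _ hk =>
    by rw [hy k (Nat.le_of_not_lt (fun hlt => hk (Finset.mem_range.mpr hlt))), smul_zero])]
  rw [Finset.smul_sum]
  refine Finset.sum_congr rfl fun k hk => ?_
  have hkn : k < n := Finset.mem_range.mp hk
  have hdvd : p ^ i ∣ (p ^ i).choose (k + d) :=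
    choose_div_dvd hI hp hcard hpn hi (by omega) (by omega)
  rw [smul_smul, Nat.mul_div_cancel' hdvd]

/-- the element `c` with `circPow a (p^i) = p^i • (a + c)` -/
def Ec (a : A) : A := ∑ k ∈ Finset.range n, (((p ^ i).choose (k + 2)) / p ^ i) • dIter a (k+1) a

theorem m_big : n + 1 < p ^ i := by
  have : p ≤ p ^ i := Nat.le_self_pow (by omega) p
  omega

theorem circPow_eq {a : A} (ha : a ∈ I) :
    circPow a (p ^ i) = p ^ i • (a + Ec (p := p) (n := n) (i := i) a) := by
  have hm := m_big hI hp hcard hpn hi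
  set m := p ^ i with hmdef
  have h2 := key2 a m
  have hsplit : m = (m - 1) + 1 := by omega
  rw [hsplit, Finset.sum_range_succ'] at h2
  rw [← hsplit] at h2
  have h0 : m.choose (0 + 1) • dIter a 0 a = m • a := by
    rw [Nat.choose_one_right]; rfl
  rw [h0] at h2
  have hvanish : ∀ k, n ≤ k → dIter a (k+1) a = 0 := by
    intro k hk
    have hmem : dIter a (k+1) a ∈ IChain I (0 + (k+1)) :=
      dIter_mem_IC_add hI a ((mem_IC0 hI).mpr ha) (k+1)
    rw [zero_add] at hmem
    have hbot : IChain I (k+1) = ⊥ := IC_top_bot hI hp hcard hpn hi (by omega)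
    rw [hbot] at hmem
    simpa using hmem
  have hred := sum_reduce hI hp hcard hpn hi 2 (m - 1) (by omega) (by omega) (by omega)
    (fun k => dIter a (k+1) a) hvanish
  simp only [show ∀ k : ℕ, k + 1 + 1 = k + 2 from fun k => rfl] at h2
  rw [← hmdef] at hred
  rw [h2, hred, ← smul_add]
  congr 1
  exact add_comm _ _

omit hp hcard hpn hi in
theorem Ec_mem_I {a : A} (ha : a ∈ I) : Ec (p := p) (n := n) (i := i) a ∈ I := by
  refine Finset.sum_induction _ (· ∈ I) (fun x y hx hy => hI.2.1 x hx y hy) hI.1 ?_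
  intro k _
  exact I_nsmul hI (dIter_mem_I hI ha (by omega)) _

omit hp hcard hpn hi in
theorem Ec_mem_IC {j : ℕ} {a : A} (haI : a ∈ I) (ha : a ∈ IChain I j) :
    Ec (p := p) (n := n) (i := i) a ∈ IChain I (j+1) := by
  refine AddSubgroup.sum_mem _ ?_
  intro k _
  refine AddSubgroup.nsmul_mem _ ?_ _
  have := dIter_mem_IC_add hI a ha (k+1)
  exact IC_le_of_le hI (by omega) this

end Assembly
end LeftBrace
namespace LeftBrace
variable {A : Type*} [LeftBrace A]

theorem circ_eq_star (a b : A) : circ a b = star a b + a + b := by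
  unfold star; abel

section Assembly2

variable [Fintype A] {p n i : ℕ} {I : Set A}
  (hI : IsIdeal I) (hp : p.Prime) (hcard : Nat.card A = p ^ n)
  (hpn : n + 1 < p) (hi : 1 ≤ i)

include hI

/-- second reduced coefficient sum: `star (circPow a (p^i)) b = p^i • Sc a b` -/
def Sc (a b : A) : A :=
  ∑ k ∈ Finset.range n, (((p ^ i).choose (k + 1)) / p ^ i) • dIter a (k+1) b

omit hp hcard hpn hi in
theorem Sc_mem_I {a : A} (ha : a ∈ I) (b : A) : Sc (p := p) (n := n) (i := i) a b ∈ I := by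
  refine Finset.sum_induction _ (· ∈ I) (fun x y hx hy => hI.2.1 x hx y hy) hI.1 ?_
  intro k _
  exact I_nsmul hI (dIter_mem_I hI ha (by omega)) _

include hp hcard hpn hi

theorem star_circPow_eq {a : A} (ha : a ∈ I) (b : A) :
    star (circPow a (p ^ i)) b = p ^ i • Sc (p := p) (n := n) (i := i) a b := by
  have hm := m_big hI hp hcard hpn hi
  have h1 := key1 a b (p ^ i)
  have hvanish : ∀ k, n ≤ k → dIter a (k+1) b = 0 := by
    intro k hk
    have hmem : dIter a (k+1) b ∈ IChain I (k+1-1) := dIter_mem_IC' hI trivial ha (by omega)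
    simp only [Nat.add_sub_cancel] at hmem
    have hbot : IChain I k = ⊥ := IC_top_bot hI hp hcard hpn hi hk
    rw [hbot] at hmem
    simpa using hmem
  have hred := sum_reduce hI hp hcard hpn hi 1 (p ^ i) (by omega) (by omega) (by omega)
    (fun k => dIter a (k+1) b) hvanish
  rw [h1, hred]
  rfl

-- the set of p^i-th circ powers of elements of I
theorem mem_P_of_circClosure :
    ∀ x : A, circClosure {y : A | ∃ w ∈ I, y = circPow w (p ^ i)} x →
      x ∈ {x : A | ∃ a ∈ I, x = p ^ i • a} := by
  intro x hx
  induction hx with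
  | of y hy =>
    obtain ⟨w, hw, rfl⟩ := hy
    rw [circPow_eq hI hp hcard hpn hi hw]
    exact ⟨w + Ec (p := p) (n := n) (i := i) w, hI.2.1 _ hw _ (Ec_mem_I hI hw), rfl⟩
  | zero => exact ⟨0, hI.1, (smul_zero _).symm⟩
  | mul x y hx hy ihx ihy =>
    obtain ⟨u, hu, rfl⟩ := ihx
    obtain ⟨v, hv, rfl⟩ := ihy
    have hxI : p ^ i • u ∈ I := I_nsmul hI hu _
    have hstar : star (p ^ i • u) (p ^ i • v) = p ^ i • star (p ^ i • u) v :=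
      star_nsmul_right _ _ _
    refine ⟨star (p ^ i • u) v + u + v,
      hI.2.1 _ (hI.2.1 _ (hI.2.2.2.2.1 v _ hxI) _ hu) _ hv, ?_⟩
    rw [circ_eq_star, hstar, smul_add, smul_add]
  | inv x hx ih =>
    obtain ⟨u, hu, rfl⟩ := ih
    refine ⟨lam (inv (p ^ i • u)) (-u), I_lam hI _ (hI.2.2.1 u hu), ?_⟩
    conv_lhs => rw [inv_eq_lam]
    rw [← smul_neg, lam_nsmul]

theorem circClosure_of_mem_IC :
    ∀ t j : ℕ, n ≤ j + t → ∀ x ∈ IChain I j,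
      circClosure {y : A | ∃ w ∈ I, y = circPow w (p ^ i)} (p ^ i • x) := by
  intro t
  induction t with
  | zero =>
    intro j hj x hx
    rw [IC_top_bot hI hp hcard hpn hi (by omega)] at hx
    have : x = 0 := by simpa using hx
    rw [this, smul_zero]
    exact circClosure.zero
  | succ t IH =>
    intro j hj x hx
    have haI : x ∈ I := IC_le_I hI j x hx
    set z := circPow x (p ^ i) with hzdef
    have hz : z = p ^ i • (x + Ec (p := p) (n := n) (i := i) x) :=
      circPow_eq hI hp hcard hpn hi haI
    have hzS : circClosure {y : A | ∃ w ∈ I, y = circPow w (p ^ i)} z :=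
      circClosure.of z ⟨x, haI, rfl⟩
    set c' := lam (inv z) (- (Ec (p := p) (n := n) (i := i) x)) with hc'def
    have hc' : c' ∈ IChain I (j+1) :=
      lam_mem_IC hI (j+1) (inv z) _ ((IChain I (j+1)).neg_mem (Ec_mem_IC hI haI hx))
    have hrec := IH (j+1) (by omega) c' hc'
    have hkey : circ z (p ^ i • c') = p ^ i • x := by
      rw [circ_eq_add, lam_nsmul, hc'def, lam_lam_inv, hz, ← smul_add]
      congr 1
      abel
    have := circClosure.mul z (p ^ i • c') hzS hrec
    rwa [hkey] at this

theorem star_mem_P_of_circClosure :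
    ∀ x : A, circClosure {y : A | ∃ w ∈ I, y = circPow w (p ^ i)} x →
      ∀ b : A, star x b ∈ {x : A | ∃ a ∈ I, x = p ^ i • a} := by
  intro x hx
  induction hx with
  | of y hy =>
    obtain ⟨w, hw, rfl⟩ := hy
    intro b
    exact ⟨Sc (p := p) (n := n) (i := i) w b, Sc_mem_I hI hw b,
      star_circPow_eq hI hp hcard hpn hi hw b⟩
  | zero =>
    intro b
    rw [star_zero_left]
    exact ⟨0, hI.1, (smul_zero _).symm⟩
  | mul x y hx hy ihx ihy =>
    intro b
    obtain ⟨v, hv, hveq⟩ := ihy b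
    obtain ⟨u, hu, hueq⟩ := ihx b
    refine ⟨lam x v + u, hI.2.1 _ (I_lam hI x hv) _ hu, ?_⟩
    rw [star_circ_left, hveq, hueq, lam_nsmul, smul_add]
  | inv x hx ih =>
    intro b
    obtain ⟨u, hu, hueq⟩ := ih b
    refine ⟨- lam (inv x) u, hI.2.2.1 _ (I_lam hI (inv x) hu), ?_⟩
    rw [star_inv_left, hueq, lam_nsmul, smul_neg]

omit hp hcard hpn hi in
theorem conj_circClosure (z : A) :
    ∀ x : A, circClosure {y : A | ∃ w ∈ I, y = circPow w (p ^ i)} x →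
      circClosure {y : A | ∃ w ∈ I, y = circPow w (p ^ i)} (conj z x) := by
  intro x hx
  induction hx with
  | of y hy =>
    obtain ⟨w, hw, rfl⟩ := hy
    rw [conj_circPow]
    exact circClosure.of _ ⟨conj z w, hI.2.2.2.2.2 z w hw, rfl⟩
  | zero =>
    rw [conj_zero]
    exact circClosure.zero
  | mul x y hx hy ihx ihy =>
    rw [conj_circ]
    exact circClosure.mul _ _ ihx ihy
  | inv x hx ih =>
    rw [conj_inv]
    exact circClosure.inv _ ih

end Assembly2
end LeftBrace
open LeftBrace in
/-- in a left brace of cardinality `p^n` with `p > n+1` prime, if `I`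
is an ideal then so is `p^i·I`, for every `i`. -/
theorem smul_ideal_isIdeal (p n : ℕ) (hp : p.Prime) (hpn : n + 1 < p)
    (A : Type*) [LeftBrace A] [Fintype A] (hcard : Nat.card A = p ^ n)
    (I : Set A) (hI : IsIdeal I) (i : ℕ) :
    IsIdeal {x : A | ∃ a ∈ I, x = p ^ i • a} := by
  rcases Nat.eq_zero_or_pos i with rfl | hi
  · have hset : {x : A | ∃ a ∈ I, x = p ^ 0 • a} = I := by
      ext x
      constructor
      · rintro ⟨a, ha, rfl⟩; simpa using ha
      · intro hx; exact ⟨x, hx, by simp⟩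
    rw [hset]; exact hI
  · set S := {y : A | ∃ w ∈ I, y = circPow w (p ^ i)} with hS
    have hmemG : ∀ x ∈ {x : A | ∃ a ∈ I, x = p ^ i • a}, circClosure S x := by
      rintro x ⟨a, ha, rfl⟩
      exact circClosure_of_mem_IC hI hp hcard hpn hi n 0 (by omega) a ((mem_IC0 hI).mpr ha)
    refine ⟨⟨0, hI.1, (smul_zero _).symm⟩, ?_, ?_, ?_, ?_, ?_⟩
    · rintro x ⟨a, ha, rfl⟩ y ⟨b, hb, rfl⟩
      exact ⟨a + b, hI.2.1 a ha b hb, (smul_add _ _ _).symm⟩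
    · rintro x ⟨a, ha, rfl⟩
      exact ⟨-a, hI.2.2.1 a ha, (smul_neg _ _).symm⟩
    · rintro z x ⟨a, ha, rfl⟩
      exact ⟨star z a, hI.2.2.2.1 z a ha, star_nsmul_right z _ a⟩
    · intro b x hx
      exact star_mem_P_of_circClosure hI hp hcard hpn hi x (hmemG x hx) b
    · intro z x hx
      exact mem_P_of_circClosure hI hp hcard hpn hi _ (conj_circClosure hI z x (hmemG x hx))
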